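/- Let f(x,t) = 2t / (π (t² + x²)) for x > 0, t > 0 be the folded Cauchy density, and define the n-fold composed density recursively by q₁(x,t) = f(x,t) and q_{k+1}(x,t) = ∫₀^∞ q_k(x,s) f(s,t) ds. Then for every n ≥ 1, every t > 0 and every real η with 0 < η < 2, one has ∫₀^∞ x^(η−1) q_n(x,t) dx = t^(η−1) / sin^n(η π / 2), which equals ( ∫₀^∞ x^(η−1) f(x, t^(1/n)) dx )^n; hence the n-fold iterated folded Cauchy process |C¹(|C²(…|Cⁿ(t)|…)|)| has the same distribution as the product ∏_{j=1}^n |Cʲ(t^(1/n))| of n independent folded Cauchy processes. -/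

import Mathlib

open MeasureTheory

/-- The folded Cauchy density `f(x,t) = 2t/(π(t²+x²))` for `x > 0`. -/
noncomputable def fC (x t : ℝ) : ℝ := 2 * t / (Real.pi * (t ^ 2 + x ^ 2))

/-- The `(k+1)`-fold composed folded Cauchy density:
`q₁ = f` and `q_{k+1}(x,t) = ∫₀^∞ q_k(x,s) f(s,t) ds`. -/
noncomputable def qC : ℕ → ℝ → ℝ → ℝ
  | 0 => fC
  | (k + 1) => fun x t => ∫ s in Set.Ioi (0:ℝ), qC k x s * fC s t

lemma fC_meas : Measurable (Function.uncurry fC) := by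
  unfold Function.uncurry fC; fun_prop

lemma fC_nonneg {x t : ℝ} (ht : 0 ≤ t) : 0 ≤ fC x t := by
  unfold fC; positivity

lemma qC_meas : ∀ k, Measurable (Function.uncurry (qC k))
  | 0 => fC_meas
  | (k + 1) => by
    have hg : Measurable (fun q : (ℝ × ℝ) × ℝ => qC k q.1.1 q.2 * fC q.2 q.1.2) := by
      exact ((qC_meas k).comp (measurable_fst.fst.prodMk measurable_snd)).mul
        (fC_meas.comp (measurable_snd.prodMk measurable_fst.snd))
    have := (hg.stronglyMeasurable.integral_prod_right'
      (ν := volume.restrict (Set.Ioi (0:ℝ)))).measurable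
    exact this

lemma qC_nonneg : ∀ k (x t : ℝ), 0 ≤ t → 0 ≤ qC k x t
  | 0, x, t, ht => fC_nonneg ht
  | (k + 1), x, t, ht => by
    refine setIntegral_nonneg measurableSet_Ioi fun s hs => ?_
    exact mul_nonneg (qC_nonneg k x s hs.le) (fC_nonneg ht)

lemma expint {c : ℝ} (hc : 0 < c) :
    ∫ u in Set.Ioi (0:ℝ), Real.exp (-c * u) = 1 / c := by
  have := integral_rpow_mul_exp_neg_mul_rpow (p := 1) (q := 0) (b := c)
    one_pos (by norm_num) hc
  rw [show ∫ x in Set.Ioi (0:ℝ), x ^ (0:ℝ) * Real.exp (-c * x ^ (1:ℝ))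
      = ∫ u in Set.Ioi (0:ℝ), Real.exp (-c * u) from
    setIntegral_congr_fun measurableSet_Ioi (fun x hx => by
      rw [Real.rpow_zero, Real.rpow_one, one_mul])] at this
  rw [this]
  norm_num [Real.Gamma_one, Real.rpow_neg_one]

lemma gauss_val {η : ℝ} (hη₀ : 0 < η) {u : ℝ} (hu : 0 < u) :
    ∫ x in Set.Ioi (0:ℝ), x ^ (η - 1) * Real.exp (-u * x ^ 2)
      = u ^ (-(η/2)) * ((1/2) * Real.Gamma (η/2)) := by
  have h := integral_rpow_mul_exp_neg_mul_rpow (p := 2) (q := η - 1) (b := u)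
    two_pos (by linarith) hu
  simp_rw [Real.rpow_two] at h
  rw [h, show (-(η-1+1)/2 : ℝ) = -(η/2) by ring, show ((η-1+1)/2 : ℝ) = η/2 by ring, mul_assoc]

lemma gauss_int {η : ℝ} (hη₀ : 0 < η) {u : ℝ} (hu : 0 < u) :
    IntegrableOn (fun x : ℝ => x ^ (η - 1) * Real.exp (-u * x ^ 2)) (Set.Ioi 0) := by
  have := integrableOn_rpow_mul_exp_neg_mul_rpow (s := η - 1) (p := 2) (b := u)
    (by linarith) two_pos hu
  simpa [Real.rpow_two] using this

lemma laplace_val {η : ℝ} (hη₂ : η < 2) {b : ℝ} (hb : 0 < b) :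
    ∫ u in Set.Ioi (0:ℝ), u ^ (-(η/2)) * Real.exp (-b * u)
      = b ^ (η/2 - 1) * Real.Gamma (1 - η/2) := by
  have h := integral_rpow_mul_exp_neg_mul_rpow (p := 1) (q := -(η/2)) (b := b)
    one_pos (by linarith) hb
  simp_rw [Real.rpow_one] at h
  rw [h, show (-(-(η/2)+1)/1 : ℝ) = η/2 - 1 by ring, show ((-(η/2)+1)/1 : ℝ) = 1 - η/2 by ring]
  ring

lemma laplace_int {η : ℝ} (hη₂ : η < 2) {b : ℝ} (hb : 0 < b) :
    IntegrableOn (fun u : ℝ => u ^ (-(η/2)) * Real.exp (-b * u)) (Set.Ioi 0) := by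
  have := integrableOn_rpow_mul_exp_neg_mul_rpow (s := -(η/2)) (p := 1) (b := b)
    (by linarith) one_pos hb
  simpa [Real.rpow_one] using this

lemma toReal_helper {g : ℝ → ℝ} (hm : AEStronglyMeasurable g (volume.restrict (Set.Ioi 0)))
    (hnn : ∀ x ∈ Set.Ioi (0:ℝ), 0 ≤ g x) {v : ℝ} (hv : 0 ≤ v)
    (hl : ∫⁻ x in Set.Ioi (0:ℝ), ENNReal.ofReal (g x) = ENNReal.ofReal v) :
    ∫ x in Set.Ioi (0:ℝ), g x = v := by
  rw [integral_eq_lintegral_of_nonneg_ae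
    ((ae_restrict_iff' measurableSet_Ioi).2 (ae_of_all _ hnn)) hm, hl,
    ENNReal.toReal_ofReal hv]

lemma sin_eta_pos {η : ℝ} (hη₀ : 0 < η) (hη₂ : η < 2) : 0 < Real.sin (η * Real.pi / 2) := by
  have hπ := Real.pi_pos
  exact Real.sin_pos_of_pos_of_lt_pi (by positivity) (by nlinarith)

lemma lmellin_fC {η : ℝ} (hη₀ : 0 < η) (hη₂ : η < 2) {t : ℝ} (ht : 0 < t) :
    ∫⁻ x in Set.Ioi (0:ℝ), ENNReal.ofReal (x ^ (η - 1) * fC x t)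
      = ENNReal.ofReal (t ^ (η - 1) / Real.sin (η * Real.pi / 2)) := by
  have hπ := Real.pi_pos
  have hS := sin_eta_pos hη₀ hη₂
  have hΓ : 0 < Real.Gamma (η / 2) := Real.Gamma_pos_of_pos (by positivity)
  have hΓ' : 0 < Real.Gamma (1 - η / 2) := Real.Gamma_pos_of_pos (by linarith)
  set b := t ^ 2 with hbdef
  have hb : 0 < b := by positivity
  set K : ℝ → ℝ → ℝ :=
    fun x u => 2 * t / Real.pi * x ^ (η - 1) * Real.exp (-(b + x ^ 2) * u) with hK
  have step1 : ∫⁻ x in Set.Ioi (0:ℝ), ENNReal.ofReal (x ^ (η - 1) * fC x t)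
      = ∫⁻ x in Set.Ioi (0:ℝ), ∫⁻ u in Set.Ioi (0:ℝ), ENNReal.ofReal (K x u) := by
    refine setLIntegral_congr_fun measurableSet_Ioi (fun x hx => ?_)
    have hc : 0 < b + x ^ 2 := by positivity
    have hint : IntegrableOn (fun u : ℝ => Real.exp (-(b + x ^ 2) * u)) (Set.Ioi 0) :=
      exp_neg_integrableOn_Ioi 0 hc
    have hval : ∫ u in Set.Ioi (0:ℝ), K x u = x ^ (η - 1) * fC x t := by
      simp only [hK]
      rw [show (∫ u in Set.Ioi (0:ℝ), 2 * t / Real.pi * x ^ (η - 1) * Real.exp (-(b + x ^ 2) * u))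
          = 2 * t / Real.pi * x ^ (η - 1) * ∫ u in Set.Ioi (0:ℝ), Real.exp (-(b + x ^ 2) * u)
        from integral_const_mul _ _, expint hc]
      unfold fC
      field_simp
      ring
    rw [← hval]
    refine ofReal_integral_eq_lintegral_ofReal (hint.const_mul _) (ae_of_all _ fun u => ?_)
    have hx' : (0:ℝ) ≤ x ^ (η - 1) := Real.rpow_nonneg (le_of_lt hx) _
    have : (0:ℝ) ≤ 2 * t / Real.pi := by positivity
    exact mul_nonneg (mul_nonneg this hx') (Real.exp_nonneg _)
  have step2 : ∫⁻ x in Set.Ioi (0:ℝ), ∫⁻ u in Set.Ioi (0:ℝ), ENNReal.ofReal (K x u)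
      = ∫⁻ u in Set.Ioi (0:ℝ), ∫⁻ x in Set.Ioi (0:ℝ), ENNReal.ofReal (K x u) := by
    refine lintegral_lintegral_swap ?_
    have : Measurable (fun p : ℝ × ℝ => ENNReal.ofReal (K p.1 p.2)) := by
      simp only [hK]; fun_prop
    exact this.aemeasurable
  have step3 : ∀ u ∈ Set.Ioi (0:ℝ), ∫⁻ x in Set.Ioi (0:ℝ), ENNReal.ofReal (K x u)
      = ENNReal.ofReal ((2 * t / Real.pi * Real.exp (-b * u))
          * (u ^ (-(η/2)) * ((1/2) * Real.Gamma (η/2)))) := by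
    intro u hu
    have hrw : ∀ x : ℝ, K x u
        = (2 * t / Real.pi * Real.exp (-b * u)) * (x ^ (η - 1) * Real.exp (-u * x ^ 2)) := by
      intro x
      simp only [hK]
      rw [show -(b + x ^ 2) * u = -b * u + -u * x ^ 2 by ring, Real.exp_add]
      ring
    have hcnn : (0:ℝ) ≤ 2 * t / Real.pi * Real.exp (-b * u) := by positivity
    calc ∫⁻ x in Set.Ioi (0:ℝ), ENNReal.ofReal (K x u)
        = ∫⁻ x in Set.Ioi (0:ℝ), ENNReal.ofReal (2 * t / Real.pi * Real.exp (-b * u))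
            * ENNReal.ofReal (x ^ (η - 1) * Real.exp (-u * x ^ 2)) := by
          refine lintegral_congr fun x => ?_
          rw [hrw x, ENNReal.ofReal_mul hcnn]
      _ = ENNReal.ofReal (2 * t / Real.pi * Real.exp (-b * u))
            * ∫⁻ x in Set.Ioi (0:ℝ), ENNReal.ofReal (x ^ (η - 1) * Real.exp (-u * x ^ 2)) :=
          lintegral_const_mul' _ _ ENNReal.ofReal_ne_top
      _ = _ := by
          rw [← ofReal_integral_eq_lintegral_ofReal (gauss_int hη₀ hu)
              ((ae_restrict_iff' measurableSet_Ioi).2 (ae_of_all _ fun x hx =>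
                mul_nonneg (Real.rpow_nonneg (le_of_lt hx) _) (Real.exp_nonneg _))),
            gauss_val hη₀ hu, ← ENNReal.ofReal_mul hcnn]
  rw [step1, step2]
  have step4 : ∫⁻ u in Set.Ioi (0:ℝ), ∫⁻ x in Set.Ioi (0:ℝ), ENNReal.ofReal (K x u)
      = ∫⁻ u in Set.Ioi (0:ℝ), ENNReal.ofReal (2 * t / Real.pi * ((1/2) * Real.Gamma (η/2)))
          * ENNReal.ofReal (u ^ (-(η/2)) * Real.exp (-b * u)) := by
    refine setLIntegral_congr_fun measurableSet_Ioi (fun u hu => ?_)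
    rw [step3 u hu, ← ENNReal.ofReal_mul (by positivity)]
    congr 1
    ring
  rw [step4, lintegral_const_mul' _ _ ENNReal.ofReal_ne_top,
    ← ofReal_integral_eq_lintegral_ofReal (laplace_int hη₂ hb)
      ((ae_restrict_iff' measurableSet_Ioi).2 (ae_of_all _ fun u hu =>
        mul_nonneg (Real.rpow_nonneg (le_of_lt hu) _) (Real.exp_nonneg _))),
    laplace_val hη₂ hb, ← ENNReal.ofReal_mul (by positivity)]
  congr 1
  have hbpow : b ^ (η/2 - 1) = t ^ (η - 2) := by
    rw [hbdef, ← Real.rpow_two, ← Real.rpow_mul (le_of_lt ht),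
      show (2 * (η/2 - 1) : ℝ) = η - 2 by ring]
  have hts : t * t ^ (η - 2) = t ^ (η - 1) := by
    nth_rewrite 1 [← Real.rpow_one t]
    rw [← Real.rpow_add ht, show (1 + (η - 2) : ℝ) = η - 1 by ring]
  have hsin : Real.Gamma (η/2) * Real.Gamma (1 - η/2)
      = Real.pi / Real.sin (η * Real.pi / 2) := by
    rw [Real.Gamma_mul_Gamma_one_sub (η/2), show Real.pi * (η/2) = η * Real.pi / 2 by ring]
  have : 2 * t / Real.pi * (1/2 * Real.Gamma (η/2)) * (b ^ (η/2 - 1) * Real.Gamma (1 - η/2))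
      = t * t ^ (η - 2) * (Real.Gamma (η/2) * Real.Gamma (1 - η/2)) / Real.pi := by
    rw [hbpow]; ring
  rw [this, hsin, hts]
  field_simp

lemma key {η : ℝ} (hη₀ : 0 < η) (hη₂ : η < 2) :
    ∀ k : ℕ, ∀ {t : ℝ}, 0 < t →
      ∫⁻ x in Set.Ioi (0:ℝ), ENNReal.ofReal (x ^ (η - 1) * qC k x t)
        = ENNReal.ofReal (t ^ (η - 1) / Real.sin (η * Real.pi / 2) ^ (k + 1)) := by
  intro k
  induction k with
  | zero => intro t ht; simpa [qC, pow_one] using lmellin_fC hη₀ hη₂ ht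
  | succ k ih =>
    intro t ht
    have hS := sin_eta_pos hη₀ hη₂
    set S := Real.sin (η * Real.pi / 2) with hSdef
    set G : ℝ → ENNReal :=
      fun x => ∫⁻ s in Set.Ioi (0:ℝ), ENNReal.ofReal (qC k x s * fC s t) with hG
    have hinner : Measurable (fun p : ℝ × ℝ => ENNReal.ofReal (qC k p.1 p.2 * fC p.2 t)) :=
      ENNReal.measurable_ofReal.comp ((qC_meas k).mul
        (fC_meas.comp (measurable_snd.prodMk measurable_const)))
    have hGmeas : Measurable G := hinner.lintegral_prod_right'
    -- (i) `qC (k+1) x t` is the `toReal` of `G x`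
    have hi : ∀ x : ℝ, qC (k + 1) x t = (G x).toReal := by
      intro x
      show (∫ s in Set.Ioi (0:ℝ), qC k x s * fC s t) = _
      have h2 : AEStronglyMeasurable (fun s : ℝ => qC k x s * fC s t)
          (volume.restrict (Set.Ioi 0)) :=
        (((qC_meas k).comp (measurable_const.prodMk measurable_id)).mul
          (fC_meas.comp (measurable_id.prodMk measurable_const))).aestronglyMeasurable
      rw [integral_eq_lintegral_of_nonneg_ae
        ((ae_restrict_iff' measurableSet_Ioi).2 (ae_of_all _ fun s hs =>
          mul_nonneg (qC_nonneg k x s (le_of_lt hs)) (fC_nonneg (le_of_lt ht)))) h2]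
    -- (ii) the weighted double lintegral
    have hD : ∫⁻ x in Set.Ioi (0:ℝ), ENNReal.ofReal (x ^ (η - 1)) * G x
        = ENNReal.ofReal (t ^ (η - 1) / S ^ (k + 1 + 1)) := by
      calc ∫⁻ x in Set.Ioi (0:ℝ), ENNReal.ofReal (x ^ (η - 1)) * G x
          = ∫⁻ x in Set.Ioi (0:ℝ), ∫⁻ s in Set.Ioi (0:ℝ),
              ENNReal.ofReal (x ^ (η - 1)) * ENNReal.ofReal (qC k x s * fC s t) := by
            refine lintegral_congr fun x => ?_
            exact (lintegral_const_mul' _ _ ENNReal.ofReal_ne_top).symm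
        _ = ∫⁻ s in Set.Ioi (0:ℝ), ∫⁻ x in Set.Ioi (0:ℝ),
              ENNReal.ofReal (x ^ (η - 1)) * ENNReal.ofReal (qC k x s * fC s t) := by
            refine lintegral_lintegral_swap ?_
            have : Measurable (fun p : ℝ × ℝ =>
                ENNReal.ofReal (p.1 ^ (η - 1)) * ENNReal.ofReal (qC k p.1 p.2 * fC p.2 t)) :=
              (ENNReal.measurable_ofReal.comp (by fun_prop)).mul hinner
            exact this.aemeasurable
        _ = ∫⁻ s in Set.Ioi (0:ℝ), ENNReal.ofReal (fC s t)
              * ∫⁻ x in Set.Ioi (0:ℝ), ENNReal.ofReal (x ^ (η - 1) * qC k x s) := by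
            refine setLIntegral_congr_fun measurableSet_Ioi (fun s hs => ?_)
            rw [← lintegral_const_mul' _ _ ENNReal.ofReal_ne_top]
            refine setLIntegral_congr_fun measurableSet_Ioi (fun x hx => ?_)
            rw [← ENNReal.ofReal_mul (Real.rpow_nonneg (le_of_lt hx) _),
              ← ENNReal.ofReal_mul (fC_nonneg (le_of_lt ht))]
            congr 1
            ring
        _ = ∫⁻ s in Set.Ioi (0:ℝ), ENNReal.ofReal (1 / S ^ (k + 1))
              * ENNReal.ofReal (s ^ (η - 1) * fC s t) := by
            refine setLIntegral_congr_fun measurableSet_Ioi (fun s hs => ?_)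
            rw [ih hs, ← ENNReal.ofReal_mul (fC_nonneg (le_of_lt ht)),
              ← ENNReal.ofReal_mul (by positivity)]
            congr 1
            ring
        _ = ENNReal.ofReal (1 / S ^ (k + 1)) * ENNReal.ofReal (t ^ (η - 1) / S) := by
            rw [lintegral_const_mul' _ _ ENNReal.ofReal_ne_top, lmellin_fC hη₀ hη₂ ht]
        _ = ENNReal.ofReal (t ^ (η - 1) / S ^ (k + 1 + 1)) := by
            rw [← ENNReal.ofReal_mul (by positivity)]
            congr 1
            rw [div_mul_div_comm, one_mul, ← pow_succ]
    -- (iii) a.e. finiteness of `G`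
    have hfin : ∀ᵐ x ∂(volume.restrict (Set.Ioi (0:ℝ))),
        ENNReal.ofReal (x ^ (η - 1)) * G x < ⊤ := by
      refine ae_lt_top ((ENNReal.measurable_ofReal.comp (by fun_prop)).mul hGmeas) ?_
      rw [hD]; exact ENNReal.ofReal_ne_top
    have hae : ∀ᵐ x ∂(volume.restrict (Set.Ioi (0:ℝ))),
        ENNReal.ofReal (x ^ (η - 1) * qC (k + 1) x t)
          = ENNReal.ofReal (x ^ (η - 1)) * G x := by
      filter_upwards [hfin, ae_restrict_mem measurableSet_Ioi] with x hx hmem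
      have hGx : G x ≠ ⊤ := by
        intro htop
        rw [htop, ENNReal.mul_top (by
          simp [ENNReal.ofReal_eq_zero, not_le, Real.rpow_pos_of_pos hmem])] at hx
        exact (lt_irrefl _ hx).elim
      rw [ENNReal.ofReal_mul (Real.rpow_nonneg (le_of_lt hmem) _), hi x,
        ENNReal.ofReal_toReal hGx]
    calc ∫⁻ x in Set.Ioi (0:ℝ), ENNReal.ofReal (x ^ (η - 1) * qC (k + 1) x t)
        = ∫⁻ x in Set.Ioi (0:ℝ), ENNReal.ofReal (x ^ (η - 1)) * G x := lintegral_congr_ae hae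
      _ = _ := hD


/-- the Mellin transform of the `n`-fold iterated folded Cauchy density is
`t^(η−1)/sinⁿ(ηπ/2)`, which equals the `n`-th power of the Mellin transform of the folded
Cauchy density at time `t^(1/n)`; hence `|C¹(|C²(…|Cⁿ(t)|…)|)| ≟ ∏ⱼ |Cʲ(t^(1/n))|`. -/
theorem stmt_9 (n : ℕ) (hn : 1 ≤ n) (t η : ℝ) (ht : 0 < t)
    (hη₀ : 0 < η) (hη₂ : η < 2) :
    (∫ x in Set.Ioi (0:ℝ), x ^ (η - 1) * qC (n - 1) x t)
      = t ^ (η - 1) / (Real.sin (η * Real.pi / 2)) ^ n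
    ∧ (∫ x in Set.Ioi (0:ℝ), x ^ (η - 1) * qC (n - 1) x t)
        = (∫ x in Set.Ioi (0:ℝ), x ^ (η - 1) * fC x (t ^ ((1:ℝ) / n))) ^ n := by
  have hS := sin_eta_pos hη₀ hη₂
  have hn0 : (n:ℝ) ≠ 0 := Nat.cast_ne_zero.2 (by omega)
  have hmell : ∀ {u : ℝ}, 0 < u → ∀ k : ℕ,
      (∫ x in Set.Ioi (0:ℝ), x ^ (η - 1) * qC k x u)
        = u ^ (η - 1) / Real.sin (η * Real.pi / 2) ^ (k + 1) := by
    intro u hu k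
    refine toReal_helper ?_ ?_ ?_ (key hη₀ hη₂ k hu)
    · have hm : Measurable (fun x : ℝ => x ^ (η - 1) * qC k x u) :=
        (by fun_prop : Measurable (fun x : ℝ => x ^ (η - 1))).mul
          ((qC_meas k).comp (measurable_id.prodMk measurable_const))
      exact hm.aestronglyMeasurable
    · exact fun x hx => mul_nonneg (Real.rpow_nonneg (le_of_lt hx) _)
        (qC_nonneg k x u (le_of_lt hu))
    · exact div_nonneg (Real.rpow_nonneg (le_of_lt hu) _) (by positivity)
  have h1 : (∫ x in Set.Ioi (0:ℝ), x ^ (η - 1) * qC (n - 1) x t)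
      = t ^ (η - 1) / Real.sin (η * Real.pi / 2) ^ n := by
    rw [hmell ht (n - 1), Nat.sub_add_cancel hn]
  refine ⟨h1, ?_⟩
  set t' : ℝ := t ^ ((1:ℝ) / n) with ht'def
  have ht' : 0 < t' := Real.rpow_pos_of_pos ht _
  have hmf : (∫ x in Set.Ioi (0:ℝ), x ^ (η - 1) * fC x t')
      = t' ^ (η - 1) / Real.sin (η * Real.pi / 2) := by
    have := hmell ht' 0
    simpa [qC, pow_one] using this
  rw [h1, hmf, div_pow]
  congr 1
  rw [ht'def, ← Real.rpow_mul (le_of_lt ht), ← Real.rpow_natCast (t ^ ((1:ℝ)/n * (η - 1))) n,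
    ← Real.rpow_mul (le_of_lt ht)]
  congr 1
  field_simp
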